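/- Let h be a nonzero complex number and R = ℂ[a,b]/(a² − ab + b², a²b − ab²). For integers d₁, d₂ ≥ 0 set a_{d₁,d₂} = (∏_{m=1}^{d₁+d₂} (a + b + m·h)) · (∏_{m=1}^{d₁} (a + m·h))^{-3} · (∏_{m=1}^{d₂} (b + m·h))^{-3} ∈ R, and set a_{d₁,d₂} = 0 if d₁ < 0 or d₂ < 0. Let J = ∑_{d₁,d₂≥0} a_{d₁,d₂} q₁^{d₁} q₂^{d₂} ∈ R[[q₁,q₂]], and let E_a, E_b : R[[q₁,q₂]] → R[[q₁,q₂]] be the ℂ-linear operators multiplying the coefficient of q₁^{d₁} q₂^{d₂} by (a + d₁·h) and by (b + d₂·h) respectively. Then (E_a² + E_b² − E_a E_b) J = (q₁ + q₂)·J; equivalently, for all d₁, d₂ ≥ 0 not both zero, a_{d₁,d₂}·((a+d₁h)² + (b+d₂h)² − (a+d₁h)(b+d₂h)) = a_{d₁−1,d₂} + a_{d₁,d₂−1}. This is the first quantum differential equation D₁J = 0 of the flag manifold F₃, where D₁ = h²∂₁² + h²∂₂² − h²∂₁∂₂ − q₁ − q₂. -/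

import Mathlib

/-- The cohomology ring `H^*(F₃;ℂ) = ℂ[a,b]/(a² − ab + b², a²b − ab²)` of the full flag
manifold `F₃ = F_{1,2}(ℂ³)`. -/
noncomputable abbrev FlagCohomology : Type :=
  MvPolynomial (Fin 2) ℂ ⧸ Ideal.span
    {(MvPolynomial.X 0 : MvPolynomial (Fin 2) ℂ) ^ 2
        - MvPolynomial.X 0 * MvPolynomial.X 1 + MvPolynomial.X 1 ^ 2,
      (MvPolynomial.X 0 : MvPolynomial (Fin 2) ℂ) ^ 2 * MvPolynomial.X 1
        - MvPolynomial.X 0 * MvPolynomial.X 1 ^ 2}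

/-- The degree-two generator `a`. -/
noncomputable abbrev flagA : FlagCohomology :=
  Ideal.Quotient.mk _ (MvPolynomial.X 0)

/-- The degree-two generator `b`. -/
noncomputable abbrev flagB : FlagCohomology :=
  Ideal.Quotient.mk _ (MvPolynomial.X 1)

open MvPolynomial in
lemma flag_rel1 : flagA ^ 2 - flagA * flagB + flagB ^ 2 = 0 := by
  have : (Ideal.Quotient.mk _ ((X 0 : MvPolynomial (Fin 2) ℂ) ^ 2 - X 0 * X 1 + X 1 ^ 2) :
      FlagCohomology) = 0 := by
    rw [Ideal.Quotient.eq_zero_iff_mem]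
    exact Ideal.subset_span (Set.mem_insert _ _)
  simpa [map_add, map_sub, map_mul, map_pow] using this

open MvPolynomial in
lemma flag_rel2 : flagA ^ 2 * flagB - flagA * flagB ^ 2 = 0 := by
  have : (Ideal.Quotient.mk _ ((X 0 : MvPolynomial (Fin 2) ℂ) ^ 2 * X 1 - X 0 * X 1 ^ 2) :
      FlagCohomology) = 0 := by
    rw [Ideal.Quotient.eq_zero_iff_mem]
    exact Ideal.subset_span (Set.mem_insert_of_mem _ rfl)
  simpa [map_sub, map_mul, map_pow] using this

lemma flagA_cube : flagA ^ 3 = 0 := by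
  linear_combination flagA * flag_rel1 + flag_rel2

lemma flagB_cube : flagB ^ 3 = 0 := by
  linear_combination flagB * flag_rel1 - flag_rel2

lemma flag_nilA : IsNilpotent flagA := ⟨3, flagA_cube⟩
lemma flag_nilB : IsNilpotent flagB := ⟨3, flagB_cube⟩
lemma flag_nilAB : IsNilpotent (flagA + flagB) :=
  (Commute.all _ _).isNilpotent_add flag_nilA flag_nilB

lemma flag_isUnit {r : FlagCohomology} (hr : IsNilpotent r) {z : ℂ} (hz : z ≠ 0) :
    IsUnit (r + algebraMap ℂ FlagCohomology z) := by
  simpa [add_comm] using hr.isUnit_add_left_of_commute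
    ((isUnit_iff_ne_zero.mpr hz).map (algebraMap ℂ FlagCohomology)) (Commute.all _ _)

lemma flag_stepA {x u p qa c : FlagCohomology} (hx : IsUnit x) :
    (p * u) * Ring.inverse (qa * x) ^ 3 * c * x ^ 3
      = p * Ring.inverse qa ^ 3 * c * u := by
  have hx1 : Ring.inverse x * x = 1 := Ring.inverse_mul_cancel _ hx
  have hx3 : Ring.inverse x ^ 3 * x ^ 3 = 1 := by rw [← mul_pow, hx1, one_pow]
  rw [Ring.mul_inverse_rev]
  linear_combination (p * u * Ring.inverse qa ^ 3 * c) * hx3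

lemma flag_stepB {y u p qb c : FlagCohomology} (hy : IsUnit y) :
    (p * u) * c * Ring.inverse (qb * y) ^ 3 * y ^ 3
      = p * c * Ring.inverse qb ^ 3 * u := by
  have hy1 : Ring.inverse y * y = 1 := Ring.inverse_mul_cancel _ hy
  have hy3 : Ring.inverse y ^ 3 * y ^ 3 = 1 := by rw [← mul_pow, hy1, one_pow]
  rw [Ring.mul_inverse_rev]
  linear_combination (p * u * Ring.inverse qb ^ 3 * c) * hy3

section Key

variable (h : ℂ) (hh : h ≠ 0) (A : ℤ → ℤ → FlagCohomology)
    (hA : ∀ d₁ d₂ : ℕ, A d₁ d₂ =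
      (∏ k ∈ Finset.range (d₁ + d₂),
          (flagA + flagB + algebraMap ℂ FlagCohomology (((k : ℂ) + 1) * h))) *
        Ring.inverse (∏ k ∈ Finset.range d₁,
          (flagA + algebraMap ℂ FlagCohomology (((k : ℂ) + 1) * h))) ^ 3 *
        Ring.inverse (∏ k ∈ Finset.range d₂,
          (flagB + algebraMap ℂ FlagCohomology (((k : ℂ) + 1) * h))) ^ 3)
    (hA0 : ∀ d₁ d₂ : ℤ, d₁ < 0 ∨ d₂ < 0 → A d₁ d₂ = 0)

include hh hA hA0

lemma flag_keyA (d₁ d₂ : ℕ) :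
    A d₁ d₂ * (flagA + algebraMap ℂ FlagCohomology ((d₁ : ℂ) * h)) ^ 3
      = A ((d₁ : ℤ) - 1) d₂
        * (flagA + flagB + algebraMap ℂ FlagCohomology (((d₁ + d₂ : ℕ) : ℂ) * h)) := by
  rcases d₁ with _ | m
  · rw [show ((0 : ℕ) : ℤ) - 1 = -1 by norm_num, hA0 (-1) d₂ (Or.inl (by norm_num)), zero_mul]
    simp [flagA_cube]
  · rw [show (((m + 1 : ℕ)) : ℤ) - 1 = ((m : ℕ) : ℤ) by push_cast; ring,
      hA (m + 1) d₂, hA m d₂,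
      show m + 1 + d₂ = (m + d₂) + 1 from by omega,
      Finset.prod_range_succ, Finset.prod_range_succ]
    push_cast
    refine flag_stepA ?_
    have := flag_isUnit flag_nilA (z := ((m : ℂ) + 1) * h)
      (mul_ne_zero (Nat.cast_add_one_ne_zero m) hh)
    push_cast at this
    exact this

lemma flag_keyB (d₁ d₂ : ℕ) :
    A d₁ d₂ * (flagB + algebraMap ℂ FlagCohomology ((d₂ : ℂ) * h)) ^ 3
      = A d₁ ((d₂ : ℤ) - 1)
        * (flagA + flagB + algebraMap ℂ FlagCohomology (((d₁ + d₂ : ℕ) : ℂ) * h)) := by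
  rcases d₂ with _ | m
  · rw [show ((0 : ℕ) : ℤ) - 1 = -1 by norm_num, hA0 d₁ (-1) (Or.inr (by norm_num)), zero_mul]
    simp [flagB_cube]
  · rw [show (((m + 1 : ℕ)) : ℤ) - 1 = ((m : ℕ) : ℤ) by push_cast; ring,
      hA d₁ (m + 1), hA d₁ m,
      show d₁ + (m + 1) = (d₁ + m) + 1 from by omega,
      Finset.prod_range_succ, Finset.prod_range_succ]
    push_cast
    refine flag_stepB ?_
    have := flag_isUnit flag_nilB (z := ((m : ℂ) + 1) * h)
      (mul_ne_zero (Nat.cast_add_one_ne_zero m) hh)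
    push_cast at this
    exact this

lemma flag_main (d₁ d₂ : ℕ) :
    A d₁ d₂ *
        ((flagA + algebraMap ℂ FlagCohomology ((d₁ : ℂ) * h)) ^ 2
          + (flagB + algebraMap ℂ FlagCohomology ((d₂ : ℂ) * h)) ^ 2
          - (flagA + algebraMap ℂ FlagCohomology ((d₁ : ℂ) * h))
              * (flagB + algebraMap ℂ FlagCohomology ((d₂ : ℂ) * h)))
      = A ((d₁ : ℤ) - 1) d₂ + A d₁ ((d₂ : ℤ) - 1) := by
  rcases Nat.eq_zero_or_pos (d₁ + d₂) with h0 | hpos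
  · obtain ⟨rfl, rfl⟩ : d₁ = 0 ∧ d₂ = 0 := by omega
    simp only [Nat.cast_zero, zero_mul, map_zero, add_zero]
    rw [show (0 : ℤ) - 1 = -1 by norm_num, hA0 (-1) 0 (Or.inl (by norm_num)),
      hA0 0 (-1) (Or.inr (by norm_num)), add_zero]
    linear_combination (A 0 0) * flag_rel1
  · have hu : IsUnit (flagA + flagB + algebraMap ℂ FlagCohomology (((d₁ + d₂ : ℕ) : ℂ) * h)) :=
      flag_isUnit flag_nilAB (mul_ne_zero (Nat.cast_ne_zero.mpr (by omega)) hh)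
    refine hu.mul_right_cancel ?_
    have kA := flag_keyA h hh A hA hA0 d₁ d₂
    have kB := flag_keyB h hh A hA hA0 d₁ d₂
    have hmap : (algebraMap ℂ FlagCohomology) (((d₁ + d₂ : ℕ) : ℂ) * h)
        = algebraMap ℂ FlagCohomology ((d₁ : ℂ) * h)
          + algebraMap ℂ FlagCohomology ((d₂ : ℂ) * h) := by
      rw [← map_add]; congr 1; push_cast; ring
    linear_combination kA + kB + (A d₁ d₂ *
      ((flagA + algebraMap ℂ FlagCohomology ((d₁ : ℂ) * h)) ^ 2
        + (flagB + algebraMap ℂ FlagCohomology ((d₂ : ℂ) * h)) ^ 2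
        - (flagA + algebraMap ℂ FlagCohomology ((d₁ : ℂ) * h))
            * (flagB + algebraMap ℂ FlagCohomology ((d₂ : ℂ) * h)))) * hmap

end Key

theorem stmt_4 (h : ℂ) (hh : h ≠ 0)
    -- the coefficients `a_{d₁,d₂}`, extended by zero to negative indices
    (A : ℤ → ℤ → FlagCohomology)
    (hA : ∀ d₁ d₂ : ℕ, A d₁ d₂ =
      (∏ k ∈ Finset.range (d₁ + d₂),
          (flagA + flagB + algebraMap ℂ FlagCohomology (((k : ℂ) + 1) * h))) *
        Ring.inverse (∏ k ∈ Finset.range d₁,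
          (flagA + algebraMap ℂ FlagCohomology (((k : ℂ) + 1) * h))) ^ 3 *
        Ring.inverse (∏ k ∈ Finset.range d₂,
          (flagB + algebraMap ℂ FlagCohomology (((k : ℂ) + 1) * h))) ^ 3)
    (hA0 : ∀ d₁ d₂ : ℤ, d₁ < 0 ∨ d₂ < 0 → A d₁ d₂ = 0)
    -- `J = ∑ a_{d₁,d₂} q₁^{d₁} q₂^{d₂}`
    (J : MvPowerSeries (Fin 2) FlagCohomology)
    (hJ : ∀ s : Fin 2 →₀ ℕ, MvPowerSeries.coeff s J = A (s 0) (s 1))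
    -- the operators `E_a`, `E_b` multiplying the coefficient of `q₁^{d₁} q₂^{d₂}`
    -- by `a + d₁·h` and `b + d₂·h` respectively
    (Ea Eb : MvPowerSeries (Fin 2) FlagCohomology → MvPowerSeries (Fin 2) FlagCohomology)
    (hEa : ∀ F s, MvPowerSeries.coeff s (Ea F) =
      (flagA + algebraMap ℂ FlagCohomology ((s 0 : ℂ) * h)) * MvPowerSeries.coeff s F)
    (hEb : ∀ F s, MvPowerSeries.coeff s (Eb F) =
      (flagB + algebraMap ℂ FlagCohomology ((s 1 : ℂ) * h)) * MvPowerSeries.coeff s F) :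
    -- `(E_a² + E_b² − E_a E_b) J = (q₁ + q₂) J`
    Ea (Ea J) + Eb (Eb J) - Ea (Eb J)
        = (MvPowerSeries.X 0 + MvPowerSeries.X 1) * J ∧
    -- equivalently, the coefficient recursion
    ∀ d₁ d₂ : ℤ, 0 ≤ d₁ → 0 ≤ d₂ → ¬(d₁ = 0 ∧ d₂ = 0) →
      A d₁ d₂ *
        ((flagA + algebraMap ℂ FlagCohomology ((d₁ : ℂ) * h)) ^ 2
          + (flagB + algebraMap ℂ FlagCohomology ((d₂ : ℂ) * h)) ^ 2
          - (flagA + algebraMap ℂ FlagCohomology ((d₁ : ℂ) * h))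
              * (flagB + algebraMap ℂ FlagCohomology ((d₂ : ℂ) * h)))
        = A (d₁ - 1) d₂ + A d₁ (d₂ - 1) := by
  constructor
  · refine MvPowerSeries.ext fun s => ?_
    have T0 : MvPowerSeries.coeff s (MvPowerSeries.X 0 * J)
        = A ((s 0 : ℤ) - 1) (s 1) := by
      rw [MvPowerSeries.X_def, MvPowerSeries.coeff_monomial_mul]
      by_cases h0 : (1 : ℕ) ≤ s 0
      · rw [if_pos (Finsupp.single_le_iff.mpr h0), one_mul, hJ]
        have e0 : (s - Finsupp.single (0 : Fin 2) 1 : Fin 2 →₀ ℕ) 0 = s 0 - 1 := by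
          rw [Finsupp.tsub_apply, Finsupp.single_eq_same]
        have e1 : (s - Finsupp.single (0 : Fin 2) 1 : Fin 2 →₀ ℕ) 1 = s 1 := by
          rw [Finsupp.tsub_apply, Finsupp.single_eq_of_ne (by decide), tsub_zero]
        rw [e0, e1]
        congr 1
        omega
      · rw [if_neg fun hc => h0 (Finsupp.single_le_iff.mp hc),
          hA0 _ _ (Or.inl (by omega))]
    have T1 : MvPowerSeries.coeff s (MvPowerSeries.X 1 * J)
        = A (s 0) ((s 1 : ℤ) - 1) := by
      rw [MvPowerSeries.X_def, MvPowerSeries.coeff_monomial_mul]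
      by_cases h0 : (1 : ℕ) ≤ s 1
      · rw [if_pos (Finsupp.single_le_iff.mpr h0), one_mul, hJ]
        have e0 : (s - Finsupp.single (1 : Fin 2) 1 : Fin 2 →₀ ℕ) 0 = s 0 := by
          rw [Finsupp.tsub_apply, Finsupp.single_eq_of_ne (by decide), tsub_zero]
        have e1 : (s - Finsupp.single (1 : Fin 2) 1 : Fin 2 →₀ ℕ) 1 = s 1 - 1 := by
          rw [Finsupp.tsub_apply, Finsupp.single_eq_same]
        rw [e0, e1]
        congr 1
        omega
      · rw [if_neg fun hc => h0 (Finsupp.single_le_iff.mp hc),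
          hA0 _ _ (Or.inr (by omega))]
    conv_rhs => rw [add_mul]
    rw [map_sub, map_add, map_add, T0, T1]
    simp only [hEa, hEb, hJ]
    linear_combination flag_main h hh A hA hA0 (s 0) (s 1)
  · intro d₁ d₂ h1 h2 _
    lift d₁ to ℕ using h1 with n₁
    lift d₂ to ℕ using h2 with n₂
    have := flag_main h hh A hA hA0 n₁ n₂
    push_cast at this ⊢
    linear_combination this
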